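/- arXiv:1212.3467 — 4 statements merged into one kernel-verified Lean document; each statement's English description precedes it below -/
import Mathlib

section
/- Let w ≤ v be positive integers, n = w + v, and let i ≠ j be positive integers with i, j ≤ w. Define V_i as the set of vectors in F_2^n having exactly i ones on the first w coordinates and exactly i ones on the last v coordinates, and m_{i,j} = max{d(X,Y) : X in V_i, Y in V_j}. If i + j ≥ v, then m_{i,j} = 2(n - i - j). -/
open Finset

lemma card_filter_Ico (n a b : ℕ) (hb : b ≤ n) :
    (Finset.univ.filter fun k : Fin n => a ≤ (k:ℕ) ∧ (k:ℕ) < b).card = b - a := by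
  rw [← Nat.card_Ico a b]
  refine Finset.card_bij' (fun k _ => (k:ℕ))
    (fun m hm => ⟨m, lt_of_lt_of_le (Finset.mem_Ico.mp hm).2 hb⟩) ?_ ?_ ?_ ?_
  · intro k hk; simp only [mem_filter] at hk; simp [Finset.mem_Ico, hk.2.1, hk.2.2]
  · intro m hm; simp only [Finset.mem_Ico] at hm; simp [hm.1, hm.2]
  · intro k hk; simp
  · intro m hm; simp

lemma zmod2_ne (a b : ZMod 2) : a ≠ b ↔ ((a ≠ 0 ∧ ¬ b ≠ 0) ∨ (b ≠ 0 ∧ ¬ a ≠ 0)) := by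
  revert a b; decide


/-- The set of vectors in `F_2^(w+v)` having exactly `i` ones on the first `w`
coordinates and exactly `i` ones on the last `v` coordinates. -/
def Vset (w v i : ℕ) : Set (Fin (w + v) → ZMod 2) :=
  {X | (Finset.univ.filter fun k => X k ≠ 0 ∧ (k : ℕ) < w).card = i ∧
       (Finset.univ.filter fun k => X k ≠ 0 ∧ w ≤ (k : ℕ)).card = i}

theorem stmt_6 (w v i j : ℕ) (hw : 0 < w) (hwv : w ≤ v)
    (hi : 0 < i) (hj : 0 < j) (hiw : i ≤ w) (hjw : j ≤ w)
    (hij : i ≠ j) (hsum : v ≤ i + j) :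
    IsGreatest {m | ∃ X ∈ Vset w v i, ∃ Y ∈ Vset w v j, hammingDist X Y = m}
      (2 * ((w + v) - i - j)) := by
  constructor
  · -- membership: explicit construction
    set X : Fin (w + v) → ZMod 2 :=
      fun k => if (k:ℕ) < i ∨ (w ≤ (k:ℕ) ∧ (k:ℕ) < w + i) then 1 else 0 with hX
    set Y : Fin (w + v) → ZMod 2 :=
      fun k => if (w - j ≤ (k:ℕ) ∧ (k:ℕ) < w) ∨ w + v - j ≤ (k:ℕ) then 1 else 0 with hY
    have hXne : ∀ k, X k ≠ 0 ↔ ((k:ℕ) < i ∨ (w ≤ (k:ℕ) ∧ (k:ℕ) < w + i)) := by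
      intro k
      by_cases h : ((k:ℕ) < i ∨ (w ≤ (k:ℕ) ∧ (k:ℕ) < w + i)) <;> simp [hX, h] <;> omega
    have hYne : ∀ k, Y k ≠ 0 ↔ ((w - j ≤ (k:ℕ) ∧ (k:ℕ) < w) ∨ w + v - j ≤ (k:ℕ)) := by
      intro k
      by_cases h : ((w - j ≤ (k:ℕ) ∧ (k:ℕ) < w) ∨ w + v - j ≤ (k:ℕ)) <;> simp [hY, h] <;> omega
    refine ⟨X, ⟨?_, ?_⟩, Y, ⟨?_, ?_⟩, ?_⟩
    · rw [show (Finset.univ.filter fun k => X k ≠ 0 ∧ (k:ℕ) < w)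
          = Finset.univ.filter fun k : Fin (w+v) => 0 ≤ (k:ℕ) ∧ (k:ℕ) < i from
        Finset.filter_congr fun k _ => by rw [hXne k]; constructor <;> intro h <;> omega]
      rw [card_filter_Ico _ 0 i (by omega)]; omega
    · rw [show (Finset.univ.filter fun k => X k ≠ 0 ∧ w ≤ (k:ℕ))
          = Finset.univ.filter fun k : Fin (w+v) => w ≤ (k:ℕ) ∧ (k:ℕ) < w + i from
        Finset.filter_congr fun k _ => by rw [hXne k]; constructor <;> intro h <;> omega]
      rw [card_filter_Ico _ w (w+i) (by omega)]; omega
    · rw [show (Finset.univ.filter fun k => Y k ≠ 0 ∧ (k:ℕ) < w)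
          = Finset.univ.filter fun k : Fin (w+v) => w - j ≤ (k:ℕ) ∧ (k:ℕ) < w from
        Finset.filter_congr fun k _ => by rw [hYne k]; constructor <;> intro h <;> omega]
      rw [card_filter_Ico _ (w-j) w (by omega)]; omega
    · rw [show (Finset.univ.filter fun k => Y k ≠ 0 ∧ w ≤ (k:ℕ))
          = Finset.univ.filter fun k : Fin (w+v) => w + v - j ≤ (k:ℕ) ∧ (k:ℕ) < w + v from
        Finset.filter_congr fun k _ => by
          rw [hYne k]
          have := k.isLt
          constructor <;> intro h <;> omega]
      rw [card_filter_Ico _ (w+v-j) (w+v) (by omega)]; omega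
    · show (Finset.univ.filter fun k => X k ≠ Y k).card = _
      have key : ∀ k : Fin (w+v), (X k ≠ Y k) ↔
          ((0 ≤ (k:ℕ) ∧ (k:ℕ) < w - j) ∨ ((i ≤ (k:ℕ) ∧ (k:ℕ) < w) ∨
           ((w ≤ (k:ℕ) ∧ (k:ℕ) < w + v - j) ∨ (w + i ≤ (k:ℕ) ∧ (k:ℕ) < w + v)))) := by
        intro k
        rw [zmod2_ne, hXne k, hYne k]
        have := k.isLt
        constructor <;> intro h <;> omega
      rw [Finset.filter_congr fun k _ => key k]
      rw [Finset.filter_or, Finset.filter_or, Finset.filter_or]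
      rw [Finset.card_union_of_disjoint (by
            simp only [Finset.disjoint_left, Finset.mem_filter, Finset.mem_univ, true_and,
              Finset.mem_union]
            intro k hk
            omega),
          Finset.card_union_of_disjoint (by
            simp only [Finset.disjoint_left, Finset.mem_filter, Finset.mem_univ, true_and,
              Finset.mem_union]
            intro k hk
            omega),
          Finset.card_union_of_disjoint (by
            simp only [Finset.disjoint_left, Finset.mem_filter, Finset.mem_univ, true_and]
            intro k hk
            omega)]
      rw [card_filter_Ico _ 0 (w-j) (by omega), card_filter_Ico _ i w (by omega),
          card_filter_Ico _ w (w+v-j) (by omega), card_filter_Ico _ (w+i) (w+v) (by omega)]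
      omega
  · -- upper bound
    rintro m ⟨X, ⟨hX1, hX2⟩, Y, ⟨hY1, hY2⟩, rfl⟩
    show (Finset.univ.filter fun k => X k ≠ Y k).card ≤ _
    set A1 := Finset.univ.filter fun k => X k ≠ 0 ∧ (k:ℕ) < w with hA1
    set B1 := Finset.univ.filter fun k => Y k ≠ 0 ∧ (k:ℕ) < w with hB1
    set A2 := Finset.univ.filter fun k => X k ≠ 0 ∧ w ≤ (k:ℕ) with hA2
    set B2 := Finset.univ.filter fun k => Y k ≠ 0 ∧ w ≤ (k:ℕ) with hB2
    have hsplit := (Finset.card_filter_add_card_filter_not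
      (s := Finset.univ.filter fun k => X k ≠ Y k)
      (p := fun k : Fin (w+v) => (k:ℕ) < w)).symm
    rw [Finset.filter_filter, Finset.filter_filter] at hsplit
    simp only [Nat.not_lt] at hsplit
    have hlow : (Finset.univ.filter fun k : Fin (w+v) => X k ≠ Y k ∧ (k:ℕ) < w)
        = (A1 \ B1) ∪ (B1 \ A1) := by
      ext k
      simp only [Finset.mem_filter, Finset.mem_union, Finset.mem_sdiff, Finset.mem_univ,
        true_and, hA1, hB1]
      rw [zmod2_ne]
      tauto
    have hup : (Finset.univ.filter fun k : Fin (w+v) => X k ≠ Y k ∧ w ≤ (k:ℕ))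
        = (A2 \ B2) ∪ (B2 \ A2) := by
      ext k
      simp only [Finset.mem_filter, Finset.mem_union, Finset.mem_sdiff, Finset.mem_univ,
        true_and, hA2, hB2]
      rw [zmod2_ne]
      tauto
    have d1 : Disjoint (A1 \ B1) (B1 \ A1) := disjoint_sdiff_sdiff
    have d2 : Disjoint (A2 \ B2) (B2 \ A2) := disjoint_sdiff_sdiff
    have e1 : (A1 ∪ B1).card + (A1 ∩ B1).card = i + j := by
      rw [Finset.card_union_add_card_inter, hX1, hY1]
    have e2 : (A2 ∪ B2).card + (A2 ∩ B2).card = i + j := by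
      rw [Finset.card_union_add_card_inter, hX2, hY2]
    have f1 : (A1 \ B1).card + (A1 ∩ B1).card = i := by
      rw [Finset.card_sdiff_add_card_inter, hX1]
    have f1' : (B1 \ A1).card + (A1 ∩ B1).card = j := by
      rw [Finset.inter_comm, Finset.card_sdiff_add_card_inter, hY1]
    have f2 : (A2 \ B2).card + (A2 ∩ B2).card = i := by
      rw [Finset.card_sdiff_add_card_inter, hX2]
    have f2' : (B2 \ A2).card + (A2 ∩ B2).card = j := by
      rw [Finset.inter_comm, Finset.card_sdiff_add_card_inter, hY2]
    have g1 : (A1 ∪ B1).card ≤ w := by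
      calc (A1 ∪ B1).card
          ≤ (Finset.univ.filter fun k : Fin (w+v) => 0 ≤ (k:ℕ) ∧ (k:ℕ) < w).card := by
            apply Finset.card_le_card
            intro k hk
            simp only [hA1, hB1, Finset.mem_union, Finset.mem_filter, Finset.mem_univ,
              true_and] at hk ⊢
            rcases hk with ⟨-, h⟩ | ⟨-, h⟩ <;> exact ⟨Nat.zero_le _, h⟩
        _ = w := by rw [card_filter_Ico _ 0 w (by omega)]; omega
    have g2 : (A2 ∪ B2).card ≤ v := by
      calc (A2 ∪ B2).card
          ≤ (Finset.univ.filter fun k : Fin (w+v) => w ≤ (k:ℕ) ∧ (k:ℕ) < w + v).card := by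
            apply Finset.card_le_card
            intro k hk
            simp only [hA2, hB2, Finset.mem_union, Finset.mem_filter, Finset.mem_univ,
              true_and] at hk ⊢
            rcases hk with ⟨-, h⟩ | ⟨-, h⟩ <;> exact ⟨h, k.isLt⟩
        _ = v := by rw [card_filter_Ico _ w (w+v) (by omega)]; omega
    rw [hsplit, hlow, hup, Finset.card_union_of_disjoint d1, Finset.card_union_of_disjoint d2]
    omega
end

section
/- Let w, v be positive integers with n = w + v, and let i ≠ j be positive integers with i, j ≤ w. With V_i the set of vectors in F_2^n having exactly i ones on the first w coordinates and exactly i ones on the last v coordinates, the maximum Hamming distance m_{i,j} between a vector in V_i and a vector in V_j equals a + b, where a = i + j if i + j < w and a = i + j - 2(i+j-w) otherwise, and b = i + j if i + j < v and b = i + j - 2(i+j-v) otherwise. -/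
open Finset

lemma card_filter_fin (n : ℕ) (p : ℕ → Prop) [DecidablePred p] :
    ((univ : Finset (Fin n)).filter (fun k => p k.val)).card = ((range n).filter p).card := by
  apply Finset.card_bij (fun k _ => k.val)
  · intro a ha; simp at ha ⊢; exact ha
  · intro a _ b _ h; exact Fin.val_injective h
  · intro b hb; simp at hb; exact ⟨⟨b, hb.1⟩, by simp [hb.2], rfl⟩

lemma card_filter_four (n : ℕ) (p : ℕ → Prop) [DecidablePred p]
    (b1 a2 b2 a3 b3 a4 b4 : ℕ)
    (h : ∀ k < n, (p k ↔ (k < b1 ∨ (a2 ≤ k ∧ k < b2) ∨ (a3 ≤ k ∧ k < b3) ∨ (a4 ≤ k ∧ k < b4))))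
    (hord : b1 ≤ a2 ∧ b2 ≤ a3 ∧ b3 ≤ a4 ∧ a2 ≤ b2 ∧ a3 ≤ b3 ∧ a4 ≤ b4 ∧ b4 ≤ n) :
    ((univ : Finset (Fin n)).filter (fun k => p k.val)).card
      = b1 + (b2 - a2) + (b3 - a3) + (b4 - a4) := by
  rw [card_filter_fin]
  have hset : (range n).filter p = Ico 0 b1 ∪ Ico a2 b2 ∪ Ico a3 b3 ∪ Ico a4 b4 := by
    ext k
    by_cases hk : k < n
    · simp only [mem_filter, mem_range, mem_Ico, mem_union, hk, true_and, h k hk]; omega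
    · simp only [mem_filter, mem_range, mem_Ico, mem_union]; omega
  rw [hset]
  rw [card_union_of_disjoint, card_union_of_disjoint, card_union_of_disjoint] <;>
    try (rw [Finset.disjoint_left]; intro x hx hx2;
         simp only [mem_union, mem_Ico, mem_range] at hx hx2; omega)
  simp only [Nat.card_Ico]; omega

lemma card_filter_four' (n : ℕ) (q : Fin n → Prop) [DecidablePred q]
    (b1 a2 b2 a3 b3 a4 b4 : ℕ)
    (h : ∀ k : Fin n, q k ↔ ((k : ℕ) < b1 ∨ (a2 ≤ (k : ℕ) ∧ (k : ℕ) < b2) ∨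
        (a3 ≤ (k : ℕ) ∧ (k : ℕ) < b3) ∨ (a4 ≤ (k : ℕ) ∧ (k : ℕ) < b4)))
    (hord : b1 ≤ a2 ∧ b2 ≤ a3 ∧ b3 ≤ a4 ∧ a2 ≤ b2 ∧ a3 ≤ b3 ∧ a4 ≤ b4 ∧ b4 ≤ n) :
    ((univ : Finset (Fin n)).filter q).card = b1 + (b2 - a2) + (b3 - a3) + (b4 - a4) := by
  have e : (univ : Finset (Fin n)).filter q =
      (univ : Finset (Fin n)).filter (fun k : Fin n => (k : ℕ) < b1 ∨ (a2 ≤ (k : ℕ) ∧ (k : ℕ) < b2) ∨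
        (a3 ≤ (k : ℕ) ∧ (k : ℕ) < b3) ∨ (a4 ≤ (k : ℕ) ∧ (k : ℕ) < b4)) := by
    apply Finset.filter_congr; intro k _; exact h k
  rw [e]
  exact card_filter_four n (fun m => m < b1 ∨ (a2 ≤ m ∧ m < b2) ∨ (a3 ≤ m ∧ m < b3) ∨
    (a4 ≤ m ∧ m < b4)) b1 a2 b2 a3 b3 a4 b4 (fun k _ => Iff.rfl) hord

lemma zmod_ite_ne_zero (c : Prop) [Decidable c] :
    ((if c then (1 : ZMod 2) else 0) ≠ 0) ↔ c := by
  split <;> simp_all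

lemma zmod_ite_ne_ite (c d : Prop) [Decidable c] [Decidable d] :
    ((if c then (1 : ZMod 2) else 0) ≠ (if d then 1 else 0)) ↔ ¬(c ↔ d) := by
  split <;> split <;> simp_all

lemma zmod_ne_iff : ∀ a b : ZMod 2, a ≠ b ↔ ¬((a ≠ 0) ↔ (b ≠ 0)) := by decide

lemma block_bound {n : ℕ} (A B S : Finset (Fin n)) (i j s : ℕ)
    (hA : A.card = i) (hB : B.card = j) (hAS : A ⊆ S) (hBS : B ⊆ S) (hS : S.card = s) :
    ((A ∪ B) \ (A ∩ B)).card ≤ (if i + j < s then i + j else i + j - 2 * (i + j - s)) := by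
  have h1 : (A ∪ B).card + (A ∩ B).card = i + j := by
    rw [Finset.card_union_add_card_inter, hA, hB]
  have h2 : (A ∪ B).card ≤ s := hS ▸ card_le_card (union_subset hAS hBS)
  have h3 : ((A ∪ B) \ (A ∩ B)).card = (A ∪ B).card - (A ∩ B).card :=
    card_sdiff_of_subset (Finset.inter_subset_union)
  have h4 : (A ∩ B).card ≤ (A ∪ B).card := card_le_card Finset.inter_subset_union
  split_ifs <;> omega

def Xvec (w v i : ℕ) : Fin (w + v) → ZMod 2 :=
  fun k => if (k : ℕ) < i ∨ (w ≤ (k : ℕ) ∧ (k : ℕ) < w + i) then 1 else 0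

def Yvec (w v j : ℕ) : Fin (w + v) → ZMod 2 :=
  fun k => if (w - j ≤ (k : ℕ) ∧ (k : ℕ) < w) ∨ (w + v - j ≤ (k : ℕ)) then 1 else 0

set_option maxHeartbeats 1000000 in
theorem stmt_7 (w v i j : ℕ) (hw : 0 < w) (hv : 0 < v) (hwv : w ≤ v)
    (hi : 0 < i) (hj : 0 < j) (hiw : i ≤ w) (hjw : j ≤ w) (hij : i ≠ j) :
    IsGreatest {m | ∃ X ∈ Vset w v i, ∃ Y ∈ Vset w v j, hammingDist X Y = m}
      ((if i + j < w then i + j else i + j - 2 * (i + j - w)) +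
       (if i + j < v then i + j else i + j - 2 * (i + j - v))) := by
  constructor
  · -- membership: explicit X, Y attaining the maximum
    refine ⟨Xvec w v i, ⟨?_, ?_⟩, Yvec w v j, ⟨?_, ?_⟩, ?_⟩
    · have := card_filter_four' (w + v)
        (fun k => Xvec w v i k ≠ 0 ∧ (k : ℕ) < w) i i i i i i i
        (fun k => by simp only [Xvec, zmod_ite_ne_zero]; omega) (by omega)
      omega
    · have := card_filter_four' (w + v)
        (fun k => Xvec w v i k ≠ 0 ∧ w ≤ (k : ℕ)) 0 0 0 w (w + i) (w + i) (w + i)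
        (fun k => by simp only [Xvec, zmod_ite_ne_zero]; omega) (by omega)
      omega
    · have := card_filter_four' (w + v)
        (fun k => Yvec w v j k ≠ 0 ∧ (k : ℕ) < w) 0 (w - j) w w w w w
        (fun k => by have hk := k.isLt; simp only [Yvec, zmod_ite_ne_zero]; omega) (by omega)
      omega
    · have := card_filter_four' (w + v)
        (fun k => Yvec w v j k ≠ 0 ∧ w ≤ (k : ℕ)) 0 0 0 0 0 (w + v - j) (w + v)
        (fun k => by have hk := k.isLt; simp only [Yvec, zmod_ite_ne_zero]; omega) (by omega)
      omega
    · have hcard := card_filter_four' (w + v)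
        (fun k => Xvec w v i k ≠ Yvec w v j k)
        (min i (w - j)) (max i (w - j)) w w (w + min i (v - j)) (w + max i (v - j)) (w + v)
        (fun k => by
          have hk := k.isLt
          simp only [Xvec, Yvec, zmod_ite_ne_ite]; omega)
        (by omega)
      show (Finset.univ.filter fun k => Xvec w v i k ≠ Yvec w v j k).card = _
      rw [hcard]
      split_ifs <;> omega
  · -- upper bound
    rintro m ⟨X, ⟨hX1, hX2⟩, Y, ⟨hY1, hY2⟩, rfl⟩
    set A1 := Finset.univ.filter fun k : Fin (w + v) => X k ≠ 0 ∧ (k : ℕ) < w with hA1def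
    set B1 := Finset.univ.filter fun k : Fin (w + v) => Y k ≠ 0 ∧ (k : ℕ) < w with hB1def
    set A2 := Finset.univ.filter fun k : Fin (w + v) => X k ≠ 0 ∧ w ≤ (k : ℕ) with hA2def
    set B2 := Finset.univ.filter fun k : Fin (w + v) => Y k ≠ 0 ∧ w ≤ (k : ℕ) with hB2def
    have hsplit := Finset.card_filter_add_card_filter_not
      (s := (univ : Finset (Fin (w + v))).filter fun k => X k ≠ Y k)
      (p := fun k => (k : ℕ) < w)
    rw [Finset.filter_filter, Finset.filter_filter] at hsplit
    have hD1 : (univ.filter fun k : Fin (w + v) => X k ≠ Y k ∧ (k : ℕ) < w)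
        = (A1 ∪ B1) \ (A1 ∩ B1) := by
      ext k
      simp only [hA1def, hB1def, mem_filter, mem_union, mem_inter, mem_sdiff, mem_univ, true_and]
      rw [zmod_ne_iff]
      tauto
    have hD2 : (univ.filter fun k : Fin (w + v) => X k ≠ Y k ∧ ¬ (k : ℕ) < w)
        = (A2 ∪ B2) \ (A2 ∩ B2) := by
      ext k
      simp only [hA2def, hB2def, mem_filter, mem_union, mem_inter, mem_sdiff, mem_univ, true_and,
        not_lt]
      rw [zmod_ne_iff]
      tauto
    have hS1 : ((univ : Finset (Fin (w + v))).filter fun k : Fin (w + v) => (k : ℕ) < w).card = w := by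
      have := card_filter_four' (w + v) (fun k : Fin (w + v) => (k : ℕ) < w) w w w w w w w
        (fun k => by omega) (by omega)
      omega
    have hS2 : ((univ : Finset (Fin (w + v))).filter fun k : Fin (w + v) => w ≤ (k : ℕ)).card = v := by
      have := card_filter_four' (w + v) (fun k : Fin (w + v) => w ≤ (k : ℕ))
        0 0 0 w (w + v) (w + v) (w + v)
        (fun k => by have hk := k.isLt; omega) (by omega)
      omega
    have hb1 : ((A1 ∪ B1) \ (A1 ∩ B1)).card ≤
        (if i + j < w then i + j else i + j - 2 * (i + j - w)) := by
      apply block_bound A1 B1 (univ.filter fun k : Fin (w + v) => (k : ℕ) < w) i j w hX1 hY1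
        ?_ ?_ hS1
      · intro k hk; simp only [hA1def, mem_filter] at hk ⊢; tauto
      · intro k hk; simp only [hB1def, mem_filter] at hk ⊢; tauto
    have hb2 : ((A2 ∪ B2) \ (A2 ∩ B2)).card ≤
        (if i + j < v then i + j else i + j - 2 * (i + j - v)) := by
      apply block_bound A2 B2 (univ.filter fun k : Fin (w + v) => w ≤ (k : ℕ)) i j v hX2 hY2
        ?_ ?_ hS2
      · intro k hk; simp only [hA2def, mem_filter] at hk ⊢; tauto
      · intro k hk; simp only [hB2def, mem_filter] at hk ⊢; tauto
    rw [hD1] at hsplit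
    rw [hD2] at hsplit
    show (Finset.univ.filter fun k => X k ≠ Y k).card ≤ _
    omega
end

section
/- Let C be an (n,d,w) constant-weight code (all codewords have weight w, pairwise distances ≥ d) with d even, and suppose i ≠ j are in {d/2,...,w} with m_{i,j} < d, where m_{i,j} is the maximum distance between a vector with exactly i ones in the first w coordinates and i ones in the last n-w coordinates and a vector with exactly j ones in the first w coordinates and j ones in the last n-w coordinates. If X in C has its support equal to the first w coordinates, then it is not possible that C contains both a codeword at distance 2i from X and a codeword at distance 2j from X. -/
open Finset

private lemma card_lt_w (n w : ℕ) (hwn : w ≤ n) :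
    (Finset.univ.filter fun k : Fin n => (k : ℕ) < w).card = w := by
  have : (Finset.univ.filter fun k : Fin n => (k : ℕ) < w)
      = (Finset.univ : Finset (Fin w)).map (Fin.castLEEmb hwn) := by
    ext k
    simp only [mem_filter, mem_univ, true_and, Finset.mem_map, Fin.castLEEmb,
      Function.Embedding.coeFn_mk]
    constructor
    · intro h; exact ⟨⟨k, h⟩, rfl⟩
    · rintro ⟨a, rfl⟩; simpa using a.isLt
  rw [this, Finset.card_map, Finset.card_univ, Fintype.card_fin]

private lemma counts (n w i : ℕ) (hwn : w ≤ n) (X Y : Fin n → ZMod 2)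
    (hsupp : ∀ k : Fin n, X k ≠ 0 ↔ (k : ℕ) < w)
    (hYw : hammingNorm Y = w)
    (hdist : hammingDist X Y = 2 * i) :
    (Finset.univ.filter fun k : Fin n => (X k + Y k) ≠ 0 ∧ (k : ℕ) < w).card = i ∧
    (Finset.univ.filter fun k : Fin n => (X k + Y k) ≠ 0 ∧ w ≤ (k : ℕ)).card = i := by
  have hzm : ∀ x y : ZMod 2, x ≠ 0 → (x + y ≠ 0 ↔ y = 0) := by decide
  have hzm' : ∀ x y : ZMod 2, x = 0 → (x + y ≠ 0 ↔ y ≠ 0) := by decide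
  have hne : ∀ x y : ZMod 2, x ≠ y ↔ x + y ≠ 0 := by decide
  have hA : (Finset.univ.filter fun k : Fin n => (X k + Y k) ≠ 0 ∧ (k : ℕ) < w)
      = Finset.univ.filter fun k : Fin n => Y k = 0 ∧ (k : ℕ) < w := by
    ext k
    simp only [mem_filter, mem_univ, true_and]
    constructor
    · rintro ⟨h1, h2⟩
      exact ⟨(hzm _ _ ((hsupp k).mpr h2)).mp h1, h2⟩
    · rintro ⟨h1, h2⟩
      exact ⟨(hzm _ _ ((hsupp k).mpr h2)).mpr h1, h2⟩
  have hB : (Finset.univ.filter fun k : Fin n => (X k + Y k) ≠ 0 ∧ w ≤ (k : ℕ))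
      = Finset.univ.filter fun k : Fin n => Y k ≠ 0 ∧ w ≤ (k : ℕ) := by
    ext k
    simp only [mem_filter, mem_univ, true_and]
    constructor
    · rintro ⟨h1, h2⟩
      have hX0 : X k = 0 := by
        by_contra h; have := (hsupp k).mp h; omega
      exact ⟨(hzm' _ _ hX0).mp h1, h2⟩
    · rintro ⟨h1, h2⟩
      have hX0 : X k = 0 := by
        by_contra h; have := (hsupp k).mp h; omega
      exact ⟨(hzm' _ _ hX0).mpr h1, h2⟩
  set a := (Finset.univ.filter fun k : Fin n => Y k = 0 ∧ (k : ℕ) < w).card with ha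
  set s := (Finset.univ.filter fun k : Fin n => Y k ≠ 0 ∧ (k : ℕ) < w).card with hs
  set b := (Finset.univ.filter fun k : Fin n => Y k ≠ 0 ∧ w ≤ (k : ℕ)).card with hb
  -- a + s = w
  have hsplit1 : a + s = w := by
    rw [← card_lt_w n w hwn]
    have key := Finset.card_filter_add_card_filter_not
      (s := Finset.univ.filter fun k : Fin n => (k : ℕ) < w) (p := fun k => Y k = 0)
    rw [Finset.filter_filter, Finset.filter_filter] at key
    have e1 : (Finset.univ.filter fun k : Fin n => (k : ℕ) < w ∧ Y k = 0)
        = Finset.univ.filter fun k : Fin n => Y k = 0 ∧ (k : ℕ) < w := by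
      ext k; simp only [mem_filter, mem_univ, true_and]; tauto
    have e2 : (Finset.univ.filter fun k : Fin n => (k : ℕ) < w ∧ ¬ Y k = 0)
        = Finset.univ.filter fun k : Fin n => Y k ≠ 0 ∧ (k : ℕ) < w := by
      ext k; simp only [mem_filter, mem_univ, true_and]; tauto
    rw [e1, e2] at key
    rw [ha, hs]; exact key
  -- s + b = w
  have hsplit2 : s + b = w := by
    rw [← hYw]
    unfold hammingNorm
    have key := Finset.card_filter_add_card_filter_not
      (s := Finset.univ.filter fun k : Fin n => Y k ≠ 0) (p := fun k : Fin n => (k : ℕ) < w)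
    rw [Finset.filter_filter, Finset.filter_filter] at key
    have e1 : (Finset.univ.filter fun k : Fin n => Y k ≠ 0 ∧ (k : ℕ) < w)
        = Finset.univ.filter fun k : Fin n => Y k ≠ 0 ∧ (k : ℕ) < w := rfl
    have e2 : (Finset.univ.filter fun k : Fin n => Y k ≠ 0 ∧ ¬ (k : ℕ) < w)
        = Finset.univ.filter fun k : Fin n => Y k ≠ 0 ∧ w ≤ (k : ℕ) := by
      ext k; simp only [mem_filter, mem_univ, true_and, not_lt]
    rw [e2] at key
    rw [hs, hb]; exact key
  -- a + b = 2 * i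
  have hsplit3 : a + b = 2 * i := by
    rw [← hdist]
    unfold hammingDist
    have key := Finset.card_filter_add_card_filter_not
      (s := Finset.univ.filter fun k : Fin n => X k ≠ Y k) (p := fun k : Fin n => (k : ℕ) < w)
    rw [Finset.filter_filter, Finset.filter_filter] at key
    have e1 : (Finset.univ.filter fun k : Fin n => X k ≠ Y k ∧ (k : ℕ) < w)
        = Finset.univ.filter fun k : Fin n => Y k = 0 ∧ (k : ℕ) < w := by
      rw [← hA]
      ext k; simp only [mem_filter, mem_univ, true_and]
      constructor
      · rintro ⟨h1, h2⟩; exact ⟨(hne _ _).mp h1, h2⟩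
      · rintro ⟨h1, h2⟩; exact ⟨(hne _ _).mpr h1, h2⟩
    have e2 : (Finset.univ.filter fun k : Fin n => X k ≠ Y k ∧ ¬ (k : ℕ) < w)
        = Finset.univ.filter fun k : Fin n => Y k ≠ 0 ∧ w ≤ (k : ℕ) := by
      rw [← hB]
      ext k; simp only [mem_filter, mem_univ, true_and, not_lt]
      constructor
      · rintro ⟨h1, h2⟩; exact ⟨(hne _ _).mp h1, h2⟩
      · rintro ⟨h1, h2⟩; exact ⟨(hne _ _).mpr h1, h2⟩
    rw [e1, e2] at key
    rw [ha, hb]; exact key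
  constructor
  · rw [hA, ← ha]; omega
  · rw [hB, ← hb]; omega

theorem stmt_8 (n d w i j : ℕ) (hwn : w ≤ n) (hd : Even d)
    (C : Finset (Fin n → ZMod 2))
    (hweight : ∀ X ∈ C, hammingNorm X = w)
    (hmin : ∀ X ∈ C, ∀ Y ∈ C, X ≠ Y → d ≤ hammingDist X Y)
    (hi : d / 2 ≤ i) (hiw : i ≤ w) (hj : d / 2 ≤ j) (hjw : j ≤ w) (hij : i ≠ j)
    (hm : ∀ Y Z : Fin n → ZMod 2,
      (Finset.univ.filter fun k => Y k ≠ 0 ∧ (k : ℕ) < w).card = i →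
      (Finset.univ.filter fun k => Y k ≠ 0 ∧ w ≤ (k : ℕ)).card = i →
      (Finset.univ.filter fun k => Z k ≠ 0 ∧ (k : ℕ) < w).card = j →
      (Finset.univ.filter fun k => Z k ≠ 0 ∧ w ≤ (k : ℕ)).card = j →
      hammingDist Y Z < d)
    (X : Fin n → ZMod 2) (hX : X ∈ C)
    (hsupp : ∀ k : Fin n, X k ≠ 0 ↔ (k : ℕ) < w) :
    ¬ ((∃ Y ∈ C, hammingDist X Y = 2 * i) ∧ (∃ Z ∈ C, hammingDist X Z = 2 * j)) := by
  rintro ⟨⟨Y, hY, hdY⟩, ⟨Z, hZ, hdZ⟩⟩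
  have hYZ : Y ≠ Z := by
    rintro rfl; rw [hdY] at hdZ; omega
  obtain ⟨hY1, hY2⟩ := counts n w i hwn X Y hsupp (hweight Y hY) hdY
  obtain ⟨hZ1, hZ2⟩ := counts n w j hwn X Z hsupp (hweight Z hZ) hdZ
  have hlt := hm (fun k => X k + Y k) (fun k => X k + Z k) hY1 hY2 hZ1 hZ2
  have hEq : hammingDist (fun k => X k + Y k) (fun k => X k + Z k) = hammingDist Y Z := by
    unfold hammingDist
    congr 1
    ext k
    have h2 : ∀ x y z : ZMod 2, (x + y ≠ x + z ↔ y ≠ z) := by decide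
    simp only [mem_filter, mem_univ, true_and, h2]
  rw [hEq] at hlt
  exact absurd (hmin Y hY Z hZ hYZ) (by omega)
end

section
/- Let T({(w_i,n_i)}_{i=1}^t, d) denote the maximum size of a binary code of length n_1 + ... + n_t and minimum distance ≥ d such that every codeword has exactly w_i ones on the i-th block of n_i coordinates. If w_1 > 0, then T({(w_i,n_i)}_{i=1}^t, d) ≤ floor( (n_1 / w_1) · T({(w_1 - 1, n_1 - 1)} ∪ {(w_i,n_i)}_{i=2}^t, d) ). -/
/-- `T t nb wb d` is the maximum size of a multiply constant-weight code: a
binary code on coordinate set `Σ i : Fin t, Fin (nb i)` (blocks of sizes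
`nb 0, …, nb (t-1)`) with minimum Hamming distance at least `d` such that every
codeword has exactly `wb i` ones on block `i`. -/
noncomputable def T (t : ℕ) (nb wb : Fin t → ℕ) (d : ℕ) : ℕ :=
  sSup {m | ∃ C : Finset ((Σ i : Fin t, Fin (nb i)) → ZMod 2),
    (∀ X ∈ C, ∀ i : Fin t,
      (Finset.univ.filter fun p : Σ i : Fin t, Fin (nb i) => p.1 = i ∧ X p ≠ 0).card = wb i) ∧
    (∀ X ∈ C, ∀ Y ∈ C, X ≠ Y → d ≤ hammingDist X Y) ∧
    C.card = m}


section Aux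

open Finset

variable {t : ℕ}

lemma sigma_fin_ext {m : ℕ} {nb : Fin m → ℕ} {r s : Σ i : Fin m, Fin (nb i)}
    (h1 : r.1 = s.1) (h2 : (r.2 : ℕ) = (s.2 : ℕ)) : r = s := by
  obtain ⟨i, a⟩ := r; obtain ⟨j, b⟩ := s
  dsimp at h1 h2
  subst h1
  rw [Fin.val_injective h2]

/-- Embedding of the shortened coordinate set into the original, skipping position `p` in block 0. -/
def eFun (nb : Fin (t + 1) → ℕ) (p : Fin (nb 0)) :
    (Σ i : Fin (t + 1), Fin (Function.update nb 0 (nb 0 - 1) i)) →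
      Σ i : Fin (t + 1), Fin (nb i) :=
  fun q =>
    if h : q.1 = 0 then
      ⟨0, Fin.cast (Nat.sub_add_cancel p.pos)
        ((Fin.cast (Nat.sub_add_cancel p.pos).symm p).succAbove
          (Fin.cast (by rw [h, Function.update_self]) q.2))⟩
    else ⟨q.1, Fin.cast (by rw [Function.update_of_ne h]) q.2⟩

lemma eFun_fst (nb : Fin (t + 1) → ℕ) (p : Fin (nb 0)) (q) : (eFun nb p q).1 = q.1 := by
  unfold eFun; split
  · simp [*]
  · rfl

lemma eFun_snd_val (nb : Fin (t + 1) → ℕ) (p : Fin (nb 0)) (q) :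
    ((eFun nb p q).2 : ℕ) =
      if q.1 = (0 : Fin (t + 1)) then
        (if (q.2 : ℕ) < (p : ℕ) then (q.2 : ℕ) else (q.2 : ℕ) + 1)
      else (q.2 : ℕ) := by
  by_cases hi : q.1 = 0
  · rw [if_pos hi]
    unfold eFun
    rw [dif_pos hi]
    simp only [Fin.coe_cast]
    unfold Fin.succAbove
    split
    · rename_i hlt
      simp only [Fin.lt_def, Fin.coe_castSucc, Fin.coe_cast] at hlt ⊢
      simp [hlt]
    · rename_i hlt
      simp only [Fin.lt_def, Fin.coe_castSucc, Fin.coe_cast] at hlt ⊢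
      simp [hlt]
  · rw [if_neg hi]
    unfold eFun
    rw [dif_neg hi]
    rfl

lemma eFun_ne (nb : Fin (t + 1) → ℕ) (p : Fin (nb 0)) (q) :
    eFun nb p q ≠ ⟨0, p⟩ := by
  intro h
  have h1 := congrArg Sigma.fst h
  rw [eFun_fst] at h1
  have h2 := congrArg (fun r : Σ i : Fin (t + 1), Fin (nb i) => (r.2 : ℕ)) h
  dsimp at h1 h2
  rw [eFun_snd_val, if_pos h1] at h2
  split at h2 <;> omega

lemma eFun_inj (nb : Fin (t + 1) → ℕ) (p : Fin (nb 0)) :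
    Function.Injective (eFun nb p) := by
  intro q q' h
  have h1 := congrArg Sigma.fst h
  rw [eFun_fst, eFun_fst] at h1
  have h2 := congrArg (fun r : Σ i : Fin (t + 1), Fin (nb i) => (r.2 : ℕ)) h
  rw [eFun_snd_val, eFun_snd_val] at h2
  refine sigma_fin_ext h1 ?_
  have hiff : (q.fst = 0) ↔ (q'.fst = 0) := by rw [h1]
  by_cases hq : q.fst = 0
  · rw [if_pos hq, if_pos (hiff.mp hq)] at h2
    split at h2 <;> split at h2 <;> omega
  · rw [if_neg hq, if_neg (fun hh => hq (hiff.mpr hh))] at h2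
    exact h2

lemma eFun_surj (nb : Fin (t + 1) → ℕ) (p : Fin (nb 0))
    (r : Σ i : Fin (t + 1), Fin (nb i)) (hr : r ≠ ⟨0, p⟩) :
    ∃ q, eFun nb p q = r := by
  by_cases hi : r.1 = 0
  · have hne : (r.2 : ℕ) ≠ (p : ℕ) := by
      intro h
      exact hr (sigma_fin_ext hi h)
    by_cases hlt : (r.2 : ℕ) < (p : ℕ)
    · refine ⟨⟨0, Fin.cast (by rw [Function.update_self]) (⟨(r.2 : ℕ), ?_⟩ : Fin (nb 0 - 1))⟩, ?_⟩
      · have := p.2; omega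
      · refine sigma_fin_ext (by rw [eFun_fst]; exact hi.symm) ?_
        rw [eFun_snd_val, if_pos rfl]
        simp [hlt]
    · have hgt : (p : ℕ) < (r.2 : ℕ) := by omega
      have hrv : (r.2 : ℕ) < nb 0 := by rw [← hi]; exact r.2.2
      refine ⟨⟨0, Fin.cast (by rw [Function.update_self]) (⟨(r.2 : ℕ) - 1, by omega⟩ : Fin (nb 0 - 1))⟩, ?_⟩
      refine sigma_fin_ext (by rw [eFun_fst]; exact hi.symm) ?_
      rw [eFun_snd_val, if_pos rfl]
      simp only [Fin.coe_cast]
      rw [if_neg (by show ¬ (r.2 : ℕ) - 1 < (p : ℕ); omega)]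
      show (r.2 : ℕ) - 1 + 1 = _
      omega
  · exact ⟨⟨r.1, Fin.cast (by rw [Function.update_of_ne hi]) r.2⟩,
      sigma_fin_ext (eFun_fst ..) (by rw [eFun_snd_val, if_neg hi]; simp)⟩

lemma map_eFun (nb : Fin (t + 1) → ℕ) (p : Fin (nb 0))
    (Q : (Σ i : Fin (t + 1), Fin (nb i)) → Prop) [DecidablePred Q] :
    (Finset.univ.filter fun q => Q (eFun nb p q)).map ⟨eFun nb p, eFun_inj nb p⟩
      = Finset.univ.filter fun r => Q r ∧ r ≠ ⟨0, p⟩ := by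
  ext r
  simp only [mem_map, mem_filter, mem_univ, true_and, Function.Embedding.coeFn_mk]
  constructor
  · rintro ⟨q, hq, rfl⟩
    exact ⟨hq, eFun_ne nb p q⟩
  · rintro ⟨hQ, hne⟩
    obtain ⟨q, rfl⟩ := eFun_surj nb p r hne
    exact ⟨q, hQ, rfl⟩

lemma block_card {m : ℕ} {nb : Fin m → ℕ} (i : Fin m)
    (P : (Σ i : Fin m, Fin (nb i)) → Prop) [DecidablePred P] :
    (Finset.univ.filter fun r : Σ i : Fin m, Fin (nb i) => r.1 = i ∧ P r).card
      = (Finset.univ.filter fun j : Fin (nb i) => P ⟨i, j⟩).card := by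
  have hmap : (Finset.univ.filter fun j : Fin (nb i) => P ⟨i, j⟩).map
      ⟨Sigma.mk i, sigma_mk_injective⟩
      = Finset.univ.filter fun r : Σ i : Fin m, Fin (nb i) => r.1 = i ∧ P r := by
    ext r
    simp only [mem_map, mem_filter, mem_univ, true_and, Function.Embedding.coeFn_mk]
    constructor
    · rintro ⟨j, hj, rfl⟩; exact ⟨rfl, hj⟩
    · rintro ⟨h1, h2⟩
      obtain ⟨i', j⟩ := r
      dsimp at h1; subst h1
      exact ⟨j, h2, rfl⟩
  rw [← hmap, Finset.card_map]

lemma card_eFun (nb : Fin (t + 1) → ℕ) (p : Fin (nb 0))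
    (Q : (Σ i : Fin (t + 1), Fin (nb i)) → Prop) [DecidablePred Q] :
    (Finset.univ.filter fun q => Q (eFun nb p q)).card
      = (Finset.univ.filter fun r => Q r ∧ r ≠ ⟨0, p⟩).card := by
  rw [← map_eFun nb p Q, Finset.card_map]

end Aux

theorem stmt_18 (t : ℕ) (nb wb : Fin (t + 1) → ℕ) (d : ℕ) (hw : 0 < wb 0) :
    T (t + 1) nb wb d ≤
      nb 0 * T (t + 1) (Function.update nb 0 (nb 0 - 1))
        (Function.update wb 0 (wb 0 - 1)) d / wb 0 := by
  have hone : ∀ x : ZMod 2, x ≠ 0 → x = 1 := by decide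
  set nb' := Function.update nb 0 (nb 0 - 1) with hnb'
  set wb' := Function.update wb 0 (wb 0 - 1) with hwb'
  set T' := T (t + 1) nb' wb' d with hT'
  -- the set defining T' is bounded above
  have hbdd : BddAbove {m | ∃ C : Finset ((Σ i : Fin (t + 1), Fin (nb' i)) → ZMod 2),
      (∀ X ∈ C, ∀ i : Fin (t + 1),
        (Finset.univ.filter fun p : Σ i : Fin (t + 1), Fin (nb' i) => p.1 = i ∧ X p ≠ 0).card = wb' i) ∧
      (∀ X ∈ C, ∀ Y ∈ C, X ≠ Y → d ≤ hammingDist X Y) ∧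
      C.card = m} := by
    refine ⟨Fintype.card ((Σ i : Fin (t + 1), Fin (nb' i)) → ZMod 2), ?_⟩
    rintro m ⟨C, -, -, rfl⟩
    exact le_trans (Finset.card_le_univ C) (le_of_eq (Finset.card_univ))
  rw [T]
  apply csSup_le
  · exact ⟨0, ⟨∅, by simp, by simp, rfl⟩⟩
  rintro m ⟨C, hwt, hdist, rfl⟩
  rw [Nat.le_div_iff_mul_le hw]
  -- key bound for each position p in block 0
  have key : ∀ p : Fin (nb 0), (C.filter fun X => X ⟨0, p⟩ ≠ 0).card ≤ T' := by
    intro p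
    set Cp := C.filter fun X => X ⟨0, p⟩ ≠ 0 with hCp
    have hCpC : ∀ X ∈ Cp, X ∈ C ∧ X ⟨0, p⟩ ≠ 0 := by
      intro X hX; simpa [hCp] using hX
    have hinj : Set.InjOn (fun X : (Σ i : Fin (t + 1), Fin (nb i)) → ZMod 2 =>
        X ∘ eFun nb p) ↑Cp := by
      intro X hX Y hY h
      funext r
      by_cases hr : r = ⟨0, p⟩
      · subst hr
        rw [hone _ (hCpC X hX).2, hone _ (hCpC Y hY).2]
      · obtain ⟨q, rfl⟩ := eFun_surj nb p r hr
        exact congrFun h q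
    set D := Cp.image (fun X : (Σ i : Fin (t + 1), Fin (nb i)) → ZMod 2 =>
      X ∘ eFun nb p) with hD
    have hcard : D.card = Cp.card := Finset.card_image_of_injOn hinj
    have hmem : D.card ∈ {m | ∃ C : Finset ((Σ i : Fin (t + 1), Fin (nb' i)) → ZMod 2),
        (∀ X ∈ C, ∀ i : Fin (t + 1),
          (Finset.univ.filter fun q : Σ i : Fin (t + 1), Fin (nb' i) => q.1 = i ∧ X q ≠ 0).card = wb' i) ∧
        (∀ X ∈ C, ∀ Y ∈ C, X ≠ Y → d ≤ hammingDist X Y) ∧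
        C.card = m} := by
      refine ⟨D, ?_, ?_, rfl⟩
      · -- weights
        rintro Z hZ i
        obtain ⟨X, hX, rfl⟩ := Finset.mem_image.mp hZ
        obtain ⟨hXC, hXp⟩ := hCpC X hX
        have e1 : (Finset.univ.filter fun q : Σ i : Fin (t + 1), Fin (nb' i) =>
            q.1 = i ∧ (X ∘ eFun nb p) q ≠ 0)
            = Finset.univ.filter fun q => (fun r => r.1 = i ∧ X r ≠ 0) (eFun nb p q) := by
          ext q
          simp only [Finset.mem_filter, Finset.mem_univ, true_and, Function.comp_apply,
            eFun_fst]
        rw [e1, card_eFun nb p (fun r => r.1 = i ∧ X r ≠ 0)]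
        by_cases hi : i = 0
        · subst hi
          have e2 : (Finset.univ.filter fun r : Σ i : Fin (t + 1), Fin (nb i) =>
              (r.1 = 0 ∧ X r ≠ 0) ∧ r ≠ ⟨0, p⟩)
              = (Finset.univ.filter fun r => r.1 = 0 ∧ X r ≠ 0).erase ⟨0, p⟩ := by
            ext r
            simp only [Finset.mem_filter, Finset.mem_univ, true_and, Finset.mem_erase]
            tauto
          rw [e2, Finset.card_erase_of_mem (by simp [hXp]), hwt X hXC 0]
          simp [hwb']
        · have e2 : (Finset.univ.filter fun r : Σ i : Fin (t + 1), Fin (nb i) =>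
              (r.1 = i ∧ X r ≠ 0) ∧ r ≠ ⟨0, p⟩)
              = Finset.univ.filter fun r => r.1 = i ∧ X r ≠ 0 := by
            ext r
            simp only [Finset.mem_filter, Finset.mem_univ, true_and, and_iff_left_iff_imp]
            rintro ⟨h1, -⟩ rfl
            exact hi h1.symm
          rw [e2, hwt X hXC i, hwb', Function.update_of_ne hi]
      · -- distances
        rintro Z hZ W hW hZW
        obtain ⟨X, hX, rfl⟩ := Finset.mem_image.mp hZ
        obtain ⟨Y, hY, rfl⟩ := Finset.mem_image.mp hW
        have hXY : X ≠ Y := fun h => hZW (by rw [h])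
        have hdeq : hammingDist (X ∘ eFun nb p) (Y ∘ eFun nb p) = hammingDist X Y := by
          show (Finset.univ.filter fun q => (X ∘ eFun nb p) q ≠ (Y ∘ eFun nb p) q).card
            = (Finset.univ.filter fun r => X r ≠ Y r).card
          have e1 : (Finset.univ.filter fun q : Σ i : Fin (t + 1), Fin (nb' i) =>
              (X ∘ eFun nb p) q ≠ (Y ∘ eFun nb p) q)
              = Finset.univ.filter fun q => (fun r => X r ≠ Y r) (eFun nb p q) := rfl
          rw [e1, card_eFun nb p (fun r => X r ≠ Y r)]
          congr 1
          ext r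
          simp only [Finset.mem_filter, Finset.mem_univ, true_and, and_iff_left_iff_imp]
          rintro h1 rfl
          exact h1 (by rw [hone _ (hCpC X hX).2, hone _ (hCpC Y hY).2])
        rw [hdeq]
        exact hdist X (hCpC X hX).1 Y (hCpC Y hY).1 hXY
    calc Cp.card = D.card := hcard.symm
      _ ≤ T' := le_csSup hbdd hmem
  -- double counting
  have count : ∑ p : Fin (nb 0), (C.filter fun X => X ⟨0, p⟩ ≠ 0).card = C.card * wb 0 := by
    simp only [Finset.card_filter]
    rw [Finset.sum_comm]
    have : ∀ X ∈ C, (∑ p : Fin (nb 0), if X ⟨0, p⟩ ≠ 0 then 1 else 0) = wb 0 := by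
      intro X hX
      rw [← Finset.card_filter]
      rw [← block_card (0 : Fin (t + 1)) (fun r => X r ≠ 0)]
      exact hwt X hX 0
    rw [Finset.sum_congr rfl this, Finset.sum_const, smul_eq_mul, mul_comm]
  calc C.card * wb 0 = ∑ p : Fin (nb 0), (C.filter fun X => X ⟨0, p⟩ ≠ 0).card := count.symm
    _ ≤ ∑ _p : Fin (nb 0), T' := Finset.sum_le_sum fun p _ => key p
    _ = nb 0 * T' := by simp [mul_comm]
end
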